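/- Let 0 < p < 1 and 0 < q < 1, and define the bit-flip channel E_1(ρ) = pρ + (1−p)XρX and the phase-flip channel E_2(ρ) = qρ + (1−q)ZρZ on 2×2 matrices, where X = [[0,1],[1,0]] and Z = [[1,0],[0,−1]]. Then for every unit vector ψ ∈ ℂ², the output states E_1(|ψ⟩⟨ψ|) and E_2(|ψ⟩⟨ψ|) are not both pure, i.e., not both of rank 1. -/

import Mathlib

open Matrix

noncomputable section

/-- The Pauli X matrix. -/
def pauliX : Matrix (Fin 2) (Fin 2) ℂ := !![0, 1; 1, 0]

/-- The Pauli Z matrix. -/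
def pauliZ : Matrix (Fin 2) (Fin 2) ℂ := !![1, 0; 0, -1]

/-- The bit-flip channel E₁(ρ) = pρ + (1-p)XρX. -/
def bitFlip (p : ℝ) (ρ : Matrix (Fin 2) (Fin 2) ℂ) : Matrix (Fin 2) (Fin 2) ℂ :=
  (p : ℂ) • ρ + ((1 - p : ℝ) : ℂ) • (pauliX * ρ * pauliX)

/-- The phase-flip channel E₂(ρ) = qρ + (1-q)ZρZ. -/
def phaseFlip (q : ℝ) (ρ : Matrix (Fin 2) (Fin 2) ℂ) : Matrix (Fin 2) (Fin 2) ℂ :=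
  (q : ℂ) • ρ + ((1 - q : ℝ) : ℂ) • (pauliZ * ρ * pauliZ)

/-- A 2×2 complex matrix of rank 1 has zero determinant. -/
lemma det_eq_zero_of_rank_one' {M : Matrix (Fin 2) (Fin 2) ℂ} (h : M.rank = 1) :
    M.det = 0 := by
  by_contra hd
  have hu : IsUnit M := (Matrix.isUnit_iff_isUnit_det M).2 (isUnit_iff_ne_zero.2 hd)
  have := Matrix.rank_of_isUnit M hu
  simp [Fintype.card_fin] at this
  omega

/-- for 0 < p,q < 1, the outputs of the bit-flip and phase-flip channels
on a pure input |ψ⟩⟨ψ| are never both pure (of rank 1). -/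
theorem bitFlip_phaseFlip_not_both_pure (p q : ℝ)
    (hp₀ : 0 < p) (hp₁ : p < 1) (hq₀ : 0 < q) (hq₁ : q < 1)
    (ψ : Fin 2 → ℂ) (hψ : star ψ ⬝ᵥ ψ = 1) :
    ¬ ((bitFlip p (vecMulVec ψ (star ψ))).rank = 1 ∧
       (phaseFlip q (vecMulVec ψ (star ψ))).rank = 1) := by
  rintro ⟨hr1, hr2⟩
  have h1 := det_eq_zero_of_rank_one' hr1
  have h2 := det_eq_zero_of_rank_one' hr2
  set a := ψ 0 with ha
  set b := ψ 1 with hb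
  have hρ : vecMulVec ψ (star ψ) =
      !![a * starRingEnd ℂ a, a * starRingEnd ℂ b;
         b * starRingEnd ℂ a, b * starRingEnd ℂ b] := by
    ext i j
    fin_cases i <;> fin_cases j <;> simp [vecMulVec] <;> rfl
  rw [hρ] at h1 h2
  simp [bitFlip, phaseFlip, pauliX, pauliZ, Matrix.det_fin_two, Matrix.mul_apply,
    Fin.sum_univ_two] at h1 h2
  simp only [dotProduct, Fin.sum_univ_two, Pi.star_apply, ← ha, ← hb] at hψ
  ring_nf at h1 h2
  have hp' : ((p - p^2 : ℝ) : ℂ) ≠ 0 := by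
    rw [Complex.ofReal_ne_zero]
    nlinarith
  have hq4 : (((4 * q - 4 * q^2 : ℝ)) : ℂ) ≠ 0 := by
    rw [Complex.ofReal_ne_zero]
    nlinarith
  have hab : a = 0 ∨ b = 0 := by
    have hx : a * starRingEnd ℂ a * b * starRingEnd ℂ b * ((4 * q - 4 * q^2 : ℝ) : ℂ) = 0 := by
      push_cast
      linear_combination h2
    have := (mul_eq_zero.mp hx).resolve_right hq4
    simpa [mul_eq_zero, map_eq_zero] using this
    -- gives a = 0 ∨ a = 0 ∨ b = 0 ∨ b = 0? try tauto
  rcases hab with h | h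
  · apply hp'
    push_cast
    rw [h] at h1 hψ
    simp only [map_zero] at h1
    simp at hψ
    linear_combination h1 - ((p:ℂ) - p^2) * (1 + starRingEnd ℂ b * b) * hψ
  · apply hp'
    push_cast
    rw [h] at h1 hψ
    simp only [map_zero] at h1
    simp at hψ
    linear_combination h1 - ((p:ℂ) - p^2) * (1 + starRingEnd ℂ a * a) * hψ
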